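/- arXiv:1905.12067 — 4 statements merged into one kernel-verified Lean document; each statement's English description precedes it below -/
import Mathlib

section
/- Let a < b be real numbers, let u and β be continuous real-valued functions on [a,b] with β(t) ≥ 0 for all t ∈ [a,b], and let α be a real-valued function integrable on [a,b]. If u(t) ≤ α(t) + ∫_a^t β(s) u(s) ds for all t ∈ [a,b], then u(t) ≤ α(t) + ∫_a^t α(s) β(s) exp(∫_s^t β(r) dr) ds for all t ∈ [a,b]. -/
open MeasureTheory Set

/-- Integral form of Gronwall's inequality. -/
theorem gronwall_integral_form
    (a b : ℝ) (hab : a < b) (u β α : ℝ → ℝ)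
    (hu : ContinuousOn u (Icc a b))
    (hβ : ContinuousOn β (Icc a b))
    (hβ0 : ∀ t ∈ Icc a b, 0 ≤ β t)
    (hα : IntervalIntegrable α volume a b)
    (h : ∀ t ∈ Icc a b, u t ≤ α t + ∫ s in a..t, β s * u s) :
    ∀ t ∈ Icc a b,
      u t ≤ α t + ∫ s in a..t, α s * β s * Real.exp (∫ r in s..t, β r) := by
  intro t ht
  obtain ⟨hat, htb⟩ := ht
  have hIcc : uIcc a b = Icc a b := uIcc_of_le hab.le
  have hβu : ContinuousOn (fun s => β s * u s) (Icc a b) := hβ.mul hu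
  have hβint : IntervalIntegrable β volume a b := by
    apply ContinuousOn.intervalIntegrable; rwa [hIcc]
  have hβuint : IntervalIntegrable (fun s => β s * u s) volume a b := by
    apply ContinuousOn.intervalIntegrable; rwa [hIcc]
  set B : ℝ → ℝ := fun x => ∫ r in a..x, β r with hBdef
  set v : ℝ → ℝ := fun x => ∫ s in a..x, β s * u s with hvdef
  have hsub : ∀ x ∈ Icc a b, uIcc a x ⊆ uIcc a b := by
    intro x hx
    rw [hIcc]
    exact uIcc_subset_Icc ⟨le_refl a, hab.le⟩ hx
  have hβsub : ∀ x ∈ Icc a b, IntervalIntegrable β volume a x := fun x hx =>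
    hβint.mono_set (hsub x hx)
  have hβusub : ∀ x ∈ Icc a b, IntervalIntegrable (fun s => β s * u s) volume a x :=
    fun x hx => hβuint.mono_set (hsub x hx)
  -- continuity of B and v on Icc a b
  have hBcont : ContinuousOn B (Icc a b) := by
    rw [← hIcc]
    exact intervalIntegral.continuousOn_primitive_interval (by rw [hIcc]; exact hβ.integrableOn_Icc)
  have hvcont : ContinuousOn v (Icc a b) := by
    rw [← hIcc]
    exact intervalIntegral.continuousOn_primitive_interval (by rw [hIcc]; exact hβu.integrableOn_Icc)
  -- derivatives at interior points
  have hmemnhds : ∀ x ∈ Ioo a b, Icc a b ∈ nhds x := fun x hx => Icc_mem_nhds hx.1 hx.2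
  have hBderiv : ∀ x ∈ Ioo a b, HasDerivAt B (β x) x := by
    intro x hx
    have hc : ContinuousAt β x := hβ.continuousAt (hmemnhds x hx)
    exact intervalIntegral.integral_hasDerivAt_right (hβsub x (Ioo_subset_Icc_self hx))
      ((hβ.mono Ioo_subset_Icc_self).stronglyMeasurableAtFilter isOpen_Ioo x hx) hc
  have hvderiv : ∀ x ∈ Ioo a b, HasDerivAt v (β x * u x) x := by
    intro x hx
    have hc : ContinuousAt (fun s => β s * u s) x := hβu.continuousAt (hmemnhds x hx)
    exact intervalIntegral.integral_hasDerivAt_right (hβusub x (Ioo_subset_Icc_self hx))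
      ((hβu.mono Ioo_subset_Icc_self).stronglyMeasurableAtFilter isOpen_Ioo x hx) hc
  -- the auxiliary function w and its derivative
  set w : ℝ → ℝ := fun x => v x * Real.exp (-(B x)) with hwdef
  set w' : ℝ → ℝ := fun x => (β x * u x - β x * v x) * Real.exp (-(B x)) with hw'def
  have hwderiv : ∀ x ∈ Ioo a b, HasDerivAt w (w' x) x := by
    intro x hx
    have hE : HasDerivAt (fun y => Real.exp (-(B y))) (Real.exp (-(B x)) * (-(β x))) x :=
      (((hBderiv x hx).neg).exp)
    have := (hvderiv x hx).fun_mul hE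
    refine this.congr_deriv ?_
    show _ = (β x * u x - β x * v x) * Real.exp (-(B x))
    ring
  have hwcont : ContinuousOn w (Icc a b) :=
    hvcont.mul (Real.continuous_exp.comp_continuousOn hBcont.neg)
  have hw'cont : ContinuousOn w' (Icc a b) :=
    ((hβu.sub (hβ.mul hvcont)).mul (Real.continuous_exp.comp_continuousOn hBcont.neg))
  -- FTC on [a, t]
  have hIccsub : Icc a t ⊆ Icc a b := Icc_subset_Icc le_rfl htb
  have hIoosub : Ioo a t ⊆ Ioo a b := Ioo_subset_Ioo le_rfl htb
  have hw'int : IntervalIntegrable w' volume a t := by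
    apply ContinuousOn.intervalIntegrable
    rw [uIcc_of_le hat]
    exact hw'cont.mono hIccsub
  have hftc : ∫ y in a..t, w' y = w t - w a :=
    intervalIntegral.integral_eq_sub_of_hasDeriv_right_of_le hat (hwcont.mono hIccsub)
      (fun x hx => ((hwderiv x (hIoosub hx)).hasDerivWithinAt)) hw'int
  have hwa : w a = 0 := by
    simp [hwdef, hvdef]
  -- compare with g
  set g : ℝ → ℝ := fun s => α s * (β s * Real.exp (-(B s))) with hgdef
  have hgint : IntervalIntegrable g volume a t := by
    apply IntervalIntegrable.mul_continuousOn
    · exact hα.mono_set (by rw [uIcc_of_le hat, hIcc]; exact Icc_subset_Icc le_rfl htb)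
    · rw [uIcc_of_le hat]
      exact (hβ.mono hIccsub).mul
        (Real.continuous_exp.comp_continuousOn (hBcont.mono hIccsub).neg)
  have hmono : ∫ y in a..t, w' y ≤ ∫ s in a..t, g s := by
    apply intervalIntegral.integral_mono_on hat hw'int hgint
    intro x hx
    have hxab : x ∈ Icc a b := hIccsub hx
    have h1 : β x * u x - β x * v x ≤ α x * β x := by
      have := h x hxab
      have hb0 := hβ0 x hxab
      nlinarith [this, hb0]
    calc w' x = (β x * u x - β x * v x) * Real.exp (-(B x)) := rfl
      _ ≤ (α x * β x) * Real.exp (-(B x)) :=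
          mul_le_mul_of_nonneg_right h1 (Real.exp_pos _).le
      _ = g x := by simp [hgdef]; ring
  have hkey : v t * Real.exp (-(B t)) ≤ ∫ s in a..t, g s := by
    have : w t = v t * Real.exp (-(B t)) := rfl
    rw [← this]
    calc w t = w t - w a := by rw [hwa]; ring
      _ = ∫ y in a..t, w' y := hftc.symm
      _ ≤ ∫ s in a..t, g s := hmono
  -- multiply by exp(B t)
  have hvt : v t ≤ Real.exp (B t) * ∫ s in a..t, g s := by
    have hpos : (0:ℝ) < Real.exp (B t) := Real.exp_pos _
    have := mul_le_mul_of_nonneg_left hkey hpos.le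
    calc v t = Real.exp (B t) * (v t * Real.exp (-(B t))) := by
          rw [← mul_assoc, mul_comm (Real.exp (B t)), mul_assoc, ← Real.exp_add]
          simp
      _ ≤ Real.exp (B t) * ∫ s in a..t, g s := this
  -- identify the right-hand integral
  have hrhs : Real.exp (B t) * (∫ s in a..t, g s)
      = ∫ s in a..t, α s * β s * Real.exp (∫ r in s..t, β r) := by
    rw [← intervalIntegral.integral_const_mul]
    apply intervalIntegral.integral_congr
    intro s hs
    rw [uIcc_of_le hat] at hs
    have hsab : s ∈ Icc a b := hIccsub hs
    have hBt : B t - B s = ∫ r in s..t, β r :=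
      intervalIntegral.integral_interval_sub_left (hβsub t ⟨hat, htb⟩) (hβsub s hsab)
    have : Real.exp (B t) * Real.exp (-(B s)) = Real.exp (∫ r in s..t, β r) := by
      rw [← Real.exp_add, ← hBt]; ring_nf
    calc Real.exp (B t) * g s = α s * β s * (Real.exp (B t) * Real.exp (-(B s))) := by
          simp only [hgdef]; ring
      _ = α s * β s * Real.exp (∫ r in s..t, β r) := by rw [this]
  have := h t ⟨hat, htb⟩
  calc u t ≤ α t + v t := this
    _ ≤ α t + Real.exp (B t) * ∫ s in a..t, g s := by linarith
    _ = α t + ∫ s in a..t, α s * β s * Real.exp (∫ r in s..t, β r) := by rw [hrhs]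
end

section
/- Let α > 0 and λ ∈ ℝ. Then for every t > 0, the function t ↦ E_{α,1}(−λ t^α) is differentiable at t with derivative −λ t^{α−1} E_{α,α}(−λ t^α). -/
open Real Set

/-- The (real-argument) Mittag-Leffler function `E_{α,β}(x) = ∑_{k=0}^∞ x^k / Γ(αk + β)`,
with the convention `1/Γ(w) = 0` at the poles of `Γ`. -/
noncomputable def mittagLefflerReal (α β x : ℝ) : ℝ :=
  ∑' k : ℕ, x ^ k / Real.Gamma (α * k + β)

private lemma gamma_convex_bound {γ x : ℝ} (hγ : 0 < γ) (hγ1 : γ ≤ 1) (hx : 1 ≤ x) :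
    Real.Gamma x * (x + γ - 1) ^ γ ≤ Real.Gamma (x + γ) := by
  have hx0 : (0:ℝ) < x := by linarith
  have hp : (0:ℝ) < x + γ - 1 := by linarith
  have hxγ : (0:ℝ) < x + γ := by linarith
  have hΓx : 0 < Real.Gamma x := Real.Gamma_pos_of_pos hx0
  have hΓxγ : 0 < Real.Gamma (x + γ) := Real.Gamma_pos_of_pos hxγ
  have hΓp : 0 < Real.Gamma (x + γ - 1) := Real.Gamma_pos_of_pos hp
  have key : Real.log (Real.Gamma x) ≤
      γ * Real.log (Real.Gamma (x + γ - 1)) + (1 - γ) * Real.log (Real.Gamma (x + γ)) := by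
    have hc := Real.convexOn_log_Gamma.2 (mem_Ioi.2 hp) (mem_Ioi.2 hxγ) hγ.le
      (by linarith : (0:ℝ) ≤ 1 - γ) (by ring)
    have harg : γ • (x + γ - 1) + (1 - γ) • (x + γ) = x := by
      simp only [smul_eq_mul]; ring
    rw [harg] at hc
    simpa [Function.comp, smul_eq_mul] using hc
  have hrec : Real.Gamma (x + γ) = (x + γ - 1) * Real.Gamma (x + γ - 1) := by
    have h := Real.Gamma_add_one (ne_of_gt hp)
    rw [show x + γ - 1 + 1 = x + γ by ring] at h
    exact h
  have hlog : Real.log (Real.Gamma (x + γ - 1)) =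
      Real.log (Real.Gamma (x + γ)) - Real.log (x + γ - 1) := by
    rw [hrec, Real.log_mul (ne_of_gt hp) (ne_of_gt hΓp)]; ring
  rw [hlog] at key
  have key2 : Real.log (Real.Gamma x * (x + γ - 1) ^ γ) ≤ Real.log (Real.Gamma (x + γ)) := by
    rw [Real.log_mul (ne_of_gt hΓx) (by positivity), Real.log_rpow hp]
    nlinarith [Real.log_nonneg (by linarith : (1:ℝ) ≤ x + γ - 1 + 1)]
  have hL : 0 < Real.Gamma x * (x + γ - 1) ^ γ := by positivity
  exact (Real.log_le_log_iff hL hΓxγ).mp key2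

private lemma gamma_ratio_bound {α x : ℝ} (hα : 0 < α) (hx : 2 ≤ x) :
    Real.Gamma x * (x - 1) ^ (min α 1) ≤ Real.Gamma (x + α) := by
  set γ := min α 1 with hγdef
  have hγ : 0 < γ := lt_min hα one_pos
  have hγ1 : γ ≤ 1 := min_le_right _ _
  have h1 : Real.Gamma x * (x - 1) ^ γ ≤ Real.Gamma x * (x + γ - 1) ^ γ := by
    refine mul_le_mul_of_nonneg_left ?_ (Real.Gamma_pos_of_pos (by linarith)).le
    exact Real.rpow_le_rpow (by linarith) (by linarith) hγ.le
  have h2 := gamma_convex_bound hγ hγ1 (by linarith : (1:ℝ) ≤ x)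
  have h3 : Real.Gamma (x + γ) ≤ Real.Gamma (x + α) := by
    rcases eq_or_lt_of_le (min_le_left α 1 : γ ≤ α) with h | h
    · rw [show x + γ = x + α by rw [hγdef, h]]
    · exact (Real.Gamma_strictMonoOn_Ici (by simp only [mem_Ici]; linarith)
        (by simp only [mem_Ici]; linarith) (by linarith)).le
  linarith

open Filter in
private lemma summable_ml_aux {B α : ℝ} (hB : 0 < B) (hα : 0 < α) :
    Summable (fun k : ℕ => B ^ k * (α * k + 1) / Real.Gamma (α * k + 1)) := by
  set γ := min α 1 with hγdef
  have hγ : 0 < γ := lt_min hα one_pos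
  apply summable_of_ratio_norm_eventually_le (r := 1/2) (by norm_num)
  have htend : Tendsto (fun k : ℕ => (α * k) ^ γ) atTop atTop :=
    (tendsto_rpow_atTop hγ).comp
      (tendsto_natCast_atTop_atTop.const_mul_atTop hα)
  have h1 : ∀ᶠ k : ℕ in atTop, (1:ℝ) ≤ α * k :=
    (tendsto_natCast_atTop_atTop.const_mul_atTop hα).eventually_ge_atTop 1
  have h2 : ∀ᶠ k : ℕ in atTop, 2 * B * (1 + α) ≤ (α * k) ^ γ :=
    htend.eventually_ge_atTop _
  filter_upwards [h1, h2] with k hk1 hk2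
  have hΓ1 : 0 < Real.Gamma (α * k + 1) := Real.Gamma_pos_of_pos (by positivity)
  have hΓ2 : 0 < Real.Gamma (α * k + α + 1) := Real.Gamma_pos_of_pos (by positivity)
  have hR : Real.Gamma (α * k + 1) * (α * k) ^ γ ≤ Real.Gamma (α * k + α + 1) := by
    have h := gamma_ratio_bound hα (by linarith : (2:ℝ) ≤ α * k + 1)
    rw [show α * (k:ℝ) + 1 - 1 = α * k by ring, show α * (k:ℝ) + 1 + α = α * k + α + 1 by ring] at h
    exact h
  have hcast : (((k:ℕ) + 1 : ℕ) : ℝ) = (k:ℝ) + 1 := by push_cast; ring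
  rw [Real.norm_of_nonneg (by positivity), Real.norm_of_nonneg (by positivity), hcast]
  have hRHS : 1/2 * (B ^ k * (α * k + 1) / Real.Gamma (α * k + 1))
      = (B ^ k * (α * k + 1)) / (2 * Real.Gamma (α * k + 1)) := by ring
  have harg : α * ((k:ℝ) + 1) + 1 = α * k + α + 1 := by ring
  rw [hRHS, harg, div_le_div_iff₀ hΓ2 (by positivity)]
  calc B ^ (k+1) * (α * k + α + 1) * (2 * Real.Gamma (α * k + 1))
      = (B ^ k * Real.Gamma (α * k + 1)) * (2 * B * (α * k + α + 1)) := by rw [pow_succ]; ring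
    _ ≤ (B ^ k * Real.Gamma (α * k + 1)) * (2 * B * ((α * k + 1) * (1 + α))) := by
        refine mul_le_mul_of_nonneg_left ?_ (by positivity)
        have : α * (k:ℝ) + α + 1 ≤ (α * k + 1) * (1 + α) := by nlinarith [mul_nonneg (sq_nonneg α) (Nat.cast_nonneg k : (0:ℝ) ≤ k)]
        nlinarith [hB.le]
    _ = (B ^ k * (α * k + 1) * Real.Gamma (α * k + 1)) * (2 * B * (1 + α)) := by ring
    _ ≤ (B ^ k * (α * k + 1) * Real.Gamma (α * k + 1)) * ((α * k) ^ γ) := by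
        refine mul_le_mul_of_nonneg_left hk2 (by positivity)
    _ = (B ^ k * (α * k + 1)) * (Real.Gamma (α * k + 1) * (α * k) ^ γ) := by ring
    _ ≤ (B ^ k * (α * k + 1)) * Real.Gamma (α * k + α + 1) := by
        refine mul_le_mul_of_nonneg_left hR (by positivity)


/-- For `t > 0`, `d/dt E_{α,1}(-λ t^α) = -λ t^{α-1} E_{α,α}(-λ t^α)`. -/
theorem hasDerivAt_mittagLeffler_neg_lambda_rpow
    (α lam : ℝ) (hα : 0 < α) (t : ℝ) (ht : 0 < t) :
    HasDerivAt (fun s : ℝ => mittagLefflerReal α 1 (-lam * s ^ α))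
      (-lam * t ^ (α - 1) * mittagLefflerReal α α (-lam * t ^ α)) t := by
  set B : ℝ := (|lam| + 1) * (t + 1) ^ α with hBdef
  have hBpos : 0 < B := by positivity
  have htS : t ∈ Ioo (t/2) (t+1) := ⟨by linarith, by linarith⟩
  set g : ℕ → ℝ → ℝ := fun k s => (-lam * s ^ α) ^ k / Real.Gamma (α * k + 1) with hgdef
  set g' : ℕ → ℝ → ℝ :=
    fun k s => (-lam) ^ k * (α * k * s ^ (α * k - 1)) / Real.Gamma (α * k + 1) with hg'def
  set u : ℕ → ℝ := fun k => 2 / t * (B ^ k * (α * k + 1) / Real.Gamma (α * k + 1)) with hudef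
  have hu : Summable u := (summable_ml_aux hBpos hα).mul_left _
  -- derivative of each term on S
  have hg : ∀ k : ℕ, ∀ y : ℝ, y ∈ Ioo (t/2) (t+1) → HasDerivAt (g k) (g' k y) y := by
    intro k y hy
    have hy0 : 0 < y := lt_trans (by linarith : (0:ℝ) < t/2) hy.1
    have h1 : HasDerivAt (fun s : ℝ => (-lam) ^ k * s ^ (α * (k:ℝ)) / Real.Gamma (α * k + 1))
        (g' k y) y := by
      have h0 : HasDerivAt (fun s : ℝ => s ^ (α * (k:ℝ)))
          (α * k * y ^ (α * k - 1)) y :=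
        Real.hasDerivAt_rpow_const (Or.inl (ne_of_gt hy0))
      exact (h0.const_mul ((-lam) ^ k)).div_const _
    refine h1.congr_of_eventuallyEq ?_
    filter_upwards [eventually_gt_nhds hy0] with s hs
    show (-lam * s ^ α) ^ k / Real.Gamma (α * k + 1) = _
    rw [mul_pow, ← Real.rpow_natCast (s ^ α) k, ← Real.rpow_mul hs.le]
  -- bounds on S
  have hg' : ∀ k : ℕ, ∀ y : ℝ, y ∈ Ioo (t/2) (t+1) → ‖g' k y‖ ≤ u k := by
    intro k y hy
    have hy0 : 0 < y := lt_trans (by linarith : (0:ℝ) < t/2) hy.1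
    have hΓ : 0 < Real.Gamma (α * k + 1) := Real.Gamma_pos_of_pos (by positivity)
    have hyk : y ^ (α * (k:ℝ) - 1) ≤ (t+1) ^ (α * (k:ℝ)) * (2/t) := by
      rw [Real.rpow_sub hy0, Real.rpow_one, div_eq_mul_inv]
      refine mul_le_mul (Real.rpow_le_rpow hy0.le hy.2.le (by positivity)) ?_
        (by positivity) (by positivity)
      rw [show (2:ℝ)/t = (t/2)⁻¹ by field_simp]
      exact inv_anti₀ (by linarith) hy.1.le
    have hlam : |lam| ^ k ≤ (|lam| + 1) ^ k :=
      pow_le_pow_left₀ (abs_nonneg _) (by linarith) k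
    have hBk : B ^ k = (|lam| + 1) ^ k * (t+1) ^ (α * (k:ℝ)) := by
      rw [hBdef, mul_pow, ← Real.rpow_natCast ((t+1) ^ α) k, ← Real.rpow_mul (by linarith)]
    have key : |lam| ^ k * (α * k * y ^ (α * (k:ℝ) - 1)) ≤ 2 / t * (B ^ k * (α * k + 1)) :=
      calc |lam| ^ k * (α * k * y ^ (α * (k:ℝ) - 1))
          ≤ (|lam| + 1) ^ k * ((α * k + 1) * ((t+1) ^ (α * (k:ℝ)) * (2/t))) := by
            refine mul_le_mul hlam ?_ (by positivity) (by positivity)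
            refine mul_le_mul (by linarith) hyk (by positivity) (by positivity)
        _ = 2 / t * (B ^ k * (α * k + 1)) := by rw [hBk]; ring
    show ‖(-lam) ^ k * (α * k * y ^ (α * (k:ℝ) - 1)) / Real.Gamma (α * k + 1)‖
      ≤ 2 / t * (B ^ k * (α * k + 1) / Real.Gamma (α * k + 1))
    rw [Real.norm_eq_abs, abs_div, abs_of_pos hΓ, abs_mul, abs_pow, abs_neg,
      abs_of_nonneg (by positivity : (0:ℝ) ≤ α * k * y ^ (α * (k:ℝ) - 1)),
      show 2 / t * (B ^ k * (α * k + 1) / Real.Gamma (α * k + 1))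
        = 2 / t * (B ^ k * (α * (k:ℝ) + 1)) / Real.Gamma (α * k + 1) by ring]
    exact div_le_div_of_nonneg_right key hΓ.le |>.trans_eq rfl
  -- summability at the point t
  have hg0 : Summable (fun k => g k t) := by
    refine Summable.of_norm_bounded (summable_ml_aux hBpos hα) (fun k => ?_)
    have hΓ : 0 < Real.Gamma (α * k + 1) := Real.Gamma_pos_of_pos (by positivity)
    show ‖(-lam * t ^ α) ^ k / Real.Gamma (α * k + 1)‖ ≤ _
    rw [Real.norm_eq_abs, abs_div, abs_of_pos hΓ, abs_pow]
    have h1 : |(-lam * t ^ α)| ≤ B := by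
      rw [abs_mul, abs_neg, abs_of_pos (Real.rpow_pos_of_pos ht α), hBdef]
      refine mul_le_mul (by linarith [abs_nonneg lam]) ?_ (by positivity) (by positivity)
      exact Real.rpow_le_rpow ht.le (by linarith) hα.le
    calc |(-lam * t ^ α)| ^ k / Real.Gamma (α * k + 1)
        ≤ B ^ k / Real.Gamma (α * k + 1) := by
          exact div_le_div_of_nonneg_right (pow_le_pow_left₀ (abs_nonneg _) h1 k) hΓ.le
      _ ≤ B ^ k * (α * k + 1) / Real.Gamma (α * k + 1) := by
          refine div_le_div_of_nonneg_right ?_ hΓ.le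
          exact le_mul_of_one_le_right (by positivity)
            (by nlinarith [mul_nonneg hα.le (Nat.cast_nonneg k : (0:ℝ) ≤ k)])
  -- apply the termwise differentiation theorem
  have H : HasDerivAt (fun z => ∑' k, g k z) (∑' k, g' k t) t :=
    hasDerivAt_tsum_of_isPreconnected hu isOpen_Ioo isPreconnected_Ioo hg hg' htS hg0 htS
  -- identify the function
  have hfun : (fun s : ℝ => mittagLefflerReal α 1 (-lam * s ^ α)) = fun z => ∑' k, g k z := by
    funext s
    rfl
  rw [hfun]
  -- identify the derivative
  have hsum : Summable (fun k => g' k t) :=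
    Summable.of_norm_bounded hu (fun k => hg' k t htS)
  have hzero : g' 0 t = 0 := by
    show (-lam) ^ 0 * (α * (0:ℕ) * t ^ (α * (0:ℕ) - 1)) / Real.Gamma (α * (0:ℕ) + 1) = 0
    simp
  have hterm : ∀ j : ℕ, g' (j+1) t
      = -lam * t ^ (α - 1) * ((-lam * t ^ α) ^ j / Real.Gamma (α * j + α)) := by
    intro j
    have hc : (0:ℝ) < α * j + α := by positivity
    have hΓj : 0 < Real.Gamma (α * j + α) := Real.Gamma_pos_of_pos hc
    have hcast : (((j+1 : ℕ)):ℝ) = (j:ℝ) + 1 := by push_cast; ring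
    show (-lam) ^ (j+1) * (α * ((j+1:ℕ):ℝ) * t ^ (α * ((j+1:ℕ):ℝ) - 1))
        / Real.Gamma (α * ((j+1:ℕ):ℝ) + 1) = _
    rw [hcast]
    have hΓrec : Real.Gamma (α * ((j:ℝ)+1) + 1) = (α * j + α) * Real.Gamma (α * j + α) := by
      rw [show α * ((j:ℝ)+1) + 1 = (α * (j:ℝ) + α) + 1 by ring, Real.Gamma_add_one (ne_of_gt hc)]
    have hpow : t ^ (α * ((j:ℝ)+1) - 1) = t ^ (α - 1) * t ^ (α * (j:ℝ)) := by
      rw [← Real.rpow_add ht]; ring_nf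
    have hml : (-lam * t ^ α) ^ j = (-lam) ^ j * t ^ (α * (j:ℝ)) := by
      rw [mul_pow, ← Real.rpow_natCast (t ^ α) j, ← Real.rpow_mul ht.le]
    rw [hΓrec, hpow, hml, pow_succ]
    field_simp
  have : ∑' k, g' k t = -lam * t ^ (α - 1) * mittagLefflerReal α α (-lam * t ^ α) := by
    rw [Summable.tsum_eq_zero_add hsum, hzero, zero_add]
    rw [show (fun j : ℕ => g' (j+1) t)
        = fun j : ℕ => -lam * t ^ (α - 1) * ((-lam * t ^ α) ^ j / Real.Gamma (α * j + α))
        from funext hterm]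
    rw [tsum_mul_left]
    rfl
  rw [this] at H
  exact H
end

section
/- Let X and Y be real normed vector spaces, let F : X → Y be Fréchet differentiable on X with derivative F', let f† ∈ X and L ≥ 0 satisfy the Lipschitz condition ‖F'(x) − F'(f†)‖ ≤ L ‖x − f†‖ for all x ∈ X (operator norm). Let g = F(f†), let g^δ ∈ Y with ‖g^δ − g‖ ≤ δ, and let f_k, f_{k+1} ∈ X satisfy the minimality relation ‖F'(f_k)(f_{k+1} − f_k) + F(f_k) − g^δ‖ ≤ ‖F'(f_k)(f† − f_k) + F(f_k) − g^δ‖. Then ‖F(f_{k+1}) − F(f†)‖ ≤ 2δ + 4L ‖f_k − f†‖² + (3L/2) ‖f_{k+1} − f†‖². -/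
/-- Averaged Taylor remainder estimate: if `‖F' x - F' e‖ ≤ L ‖x - e‖` for all `x`, then
`‖F u - F v - F' e (u - v)‖ ≤ L * ((‖u-e‖ + ‖v-e‖)/2) * ‖u - v‖`. -/
lemma taylor_avg_remainder
    {X Y : Type*} [NormedAddCommGroup X] [NormedSpace ℝ X]
    [NormedAddCommGroup Y] [NormedSpace ℝ Y]
    (F : X → Y) (F' : X → X →L[ℝ] Y)
    (hF : ∀ x : X, HasFDerivAt F (F' x) x)
    (e : X) (L : ℝ) (hL : 0 ≤ L)
    (hLip : ∀ x : X, ‖F' x - F' e‖ ≤ L * ‖x - e‖) (u v : X) :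
    ‖F u - F v - F' e (u - v)‖ ≤ L * ((‖u - e‖ + ‖v - e‖) / 2) * ‖u - v‖ := by
  set γ : ℝ → X := fun t => v + t • (u - v) with hγdef
  set h : ℝ → Y := fun t => F (γ t) - F' e (γ t) - (F v - F' e v) with hhdef
  set f' : ℝ → Y := fun t => F' (γ t) (u - v) - F' e (u - v) with hf'def
  set B : ℝ → ℝ := fun t =>
    L * ‖u - v‖ * (‖v - e‖ * t + (‖u - e‖ - ‖v - e‖) * t ^ 2 / 2) with hBdef
  set B' : ℝ → ℝ := fun t =>
    L * ‖u - v‖ * ((1 - t) * ‖v - e‖ + t * ‖u - e‖) with hB'def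
  have hγ : ∀ t : ℝ, HasDerivAt γ (u - v) t := by
    intro t
    simpa [hγdef] using ((hasDerivAt_id t).smul_const (u - v)).const_add v
  have hd : ∀ t : ℝ, HasDerivAt h (f' t) t := by
    intro t
    have h1 : HasDerivAt (fun t => F (γ t)) (F' (γ t) (u - v)) t :=
      (hF (γ t)).comp_hasDerivAt t (hγ t)
    have h2 : HasDerivAt (fun t => F' e (γ t)) (F' e (u - v)) t :=
      (F' e).hasFDerivAt.comp_hasDerivAt t (hγ t)
    exact (h1.sub h2).sub_const _
  have hB : ∀ t : ℝ, HasDerivAt B (B' t) t := by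
    intro t
    have h1 : HasDerivAt (fun t : ℝ => ‖v - e‖ * t + (‖u - e‖ - ‖v - e‖) * t ^ 2 / 2)
        (‖v - e‖ + (‖u - e‖ - ‖v - e‖) * t) t := by
      have := ((hasDerivAt_id t).const_mul ‖v - e‖).add
        (((hasDerivAt_pow 2 t).const_mul (‖u - e‖ - ‖v - e‖)).div_const 2)
      refine this.congr_deriv ?_
      push_cast; ring
    have := h1.const_mul (L * ‖u - v‖)
    refine this.congr_deriv ?_
    simp only [hB'def]; ring
  have bound : ∀ t ∈ Set.Ico (0:ℝ) 1, ‖f' t‖ ≤ B' t := by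
    intro t ht
    have hne : γ t - e = (1 - t) • (v - e) + t • (u - e) := by
      simp only [hγdef]; module
    have hn : ‖γ t - e‖ ≤ (1 - t) * ‖v - e‖ + t * ‖u - e‖ := by
      rw [hne]
      refine (norm_add_le _ _).trans ?_
      rw [norm_smul, norm_smul, Real.norm_eq_abs, Real.norm_eq_abs,
        abs_of_nonneg (by linarith [ht.2]), abs_of_nonneg ht.1]
    have h1 : ‖f' t‖ ≤ ‖F' (γ t) - F' e‖ * ‖u - v‖ := by
      have : f' t = (F' (γ t) - F' e) (u - v) := by simp [hf'def]
      rw [this]; exact (F' (γ t) - F' e).le_opNorm _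
    refine h1.trans ?_
    have h2 : ‖F' (γ t) - F' e‖ ≤ L * ((1 - t) * ‖v - e‖ + t * ‖u - e‖) :=
      (hLip (γ t)).trans (by nlinarith)
    calc ‖F' (γ t) - F' e‖ * ‖u - v‖
        ≤ (L * ((1 - t) * ‖v - e‖ + t * ‖u - e‖)) * ‖u - v‖ :=
          mul_le_mul_of_nonneg_right h2 (norm_nonneg _)
      _ = B' t := by simp [hB'def]; ring
  have key := image_norm_le_of_norm_deriv_right_le_deriv_boundary
    (f := h) (f' := f') (a := 0) (b := 1)
    (fun t _ => (hd t).continuousAt.continuousWithinAt)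
    (fun t _ => (hd t).hasDerivWithinAt)
    (by simp [hhdef, hBdef, hγdef]) hB bound
    (Set.right_mem_Icc.2 zero_le_one)
  have h1 : h 1 = F u - F v - F' e (u - v) := by
    simp [hhdef, hγdef, map_sub]
    abel
  have hB1 : B 1 = L * ((‖u - e‖ + ‖v - e‖) / 2) * ‖u - v‖ := by
    simp [hBdef]; ring
  rw [h1, hB1] at key
  exact key

/-- Residual recursion for the Ivanov-regularized Newton iteration: if `f_{k+1}` has a
smaller linearized residual than the exact solution `f†`, then the nonlinear residual of
`f_{k+1}` is controlled by the noise level and the squared errors of `f_k` and `f_{k+1}`. -/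
theorem newton_residual_recursion
    {X Y : Type*} [NormedAddCommGroup X] [NormedSpace ℝ X]
    [NormedAddCommGroup Y] [NormedSpace ℝ Y]
    (F : X → Y) (F' : X → X →L[ℝ] Y)
    (hF : ∀ x : X, HasFDerivAt F (F' x) x)
    (fdag : X) (L : ℝ) (hL : 0 ≤ L)
    (hLip : ∀ x : X, ‖F' x - F' fdag‖ ≤ L * ‖x - fdag‖)
    (δ : ℝ) (gδ : Y) (hδ : ‖gδ - F fdag‖ ≤ δ) (fk fk1 : X)
    (hmin : ‖F' fk (fk1 - fk) + F fk - gδ‖ ≤ ‖F' fk (fdag - fk) + F fk - gδ‖) :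
    ‖F fk1 - F fdag‖
      ≤ 2 * δ + 4 * L * ‖fk - fdag‖ ^ 2 + 3 * L / 2 * ‖fk1 - fdag‖ ^ 2 := by
  set a := ‖fk - fdag‖ with ha
  set b := ‖fk1 - fdag‖ with hb
  have ha0 : 0 ≤ a := norm_nonneg _
  have hb0 : 0 ≤ b := norm_nonneg _
  -- distance between iterates
  have hab : ‖fk1 - fk‖ ≤ b + a := by
    calc ‖fk1 - fk‖ = ‖(fk1 - fdag) - (fk - fdag)‖ := by abel_nf
      _ ≤ b + a := norm_sub_le _ _
  -- Lipschitz term estimates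
  have hlip_k : ‖F' fk - F' fdag‖ ≤ L * a := hLip fk
  -- averaged Taylor remainders with center fdag
  have E1 : ‖F fdag - F fk - F' fdag (fdag - fk)‖ ≤ L * (a / 2) * a := by
    have := taylor_avg_remainder F F' hF fdag L hL hLip fdag fk
    simpa [ha, norm_sub_rev (fdag) fk] using this
  have E2 : ‖F fk1 - F fk - F' fdag (fk1 - fk)‖ ≤ L * ((b + a) / 2) * ‖fk1 - fk‖ :=
    taylor_avg_remainder F F' hF fdag L hL hLip fk1 fk
  -- switch the derivative point from fdag to fk
  have opk : ∀ w : X, ‖F' fdag w - F' fk w‖ ≤ L * a * ‖w‖ := by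
    intro w
    have : F' fdag w - F' fk w = -((F' fk - F' fdag) w) := by simp
    rw [this, norm_neg]
    exact ((F' fk - F' fdag).le_opNorm w).trans
      (mul_le_mul_of_nonneg_right hlip_k (norm_nonneg _))
  have T1 : ‖F fdag - F fk - F' fk (fdag - fk)‖ ≤ 3 / 2 * L * a ^ 2 := by
    have h := norm_add_le (F fdag - F fk - F' fdag (fdag - fk))
      (F' fdag (fdag - fk) - F' fk (fdag - fk))
    have heq : F fdag - F fk - F' fdag (fdag - fk) +
        (F' fdag (fdag - fk) - F' fk (fdag - fk)) = F fdag - F fk - F' fk (fdag - fk) := by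
      abel
    rw [heq] at h
    have h2 := opk (fdag - fk)
    have hn : ‖fdag - fk‖ = a := by rw [ha, norm_sub_rev]
    rw [hn] at h2
    nlinarith [E1]
  have T2 : ‖F fk1 - F fk - F' fk (fk1 - fk)‖ ≤ L * ((b + a) / 2 + a) * (b + a) := by
    have h := norm_add_le (F fk1 - F fk - F' fdag (fk1 - fk))
      (F' fdag (fk1 - fk) - F' fk (fk1 - fk))
    have heq : F fk1 - F fk - F' fdag (fk1 - fk) +
        (F' fdag (fk1 - fk) - F' fk (fk1 - fk)) = F fk1 - F fk - F' fk (fk1 - fk) := by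
      abel
    rw [heq] at h
    have h2 := opk (fk1 - fk)
    have hE2' : ‖F fk1 - F fk - F' fdag (fk1 - fk)‖ ≤ L * ((b + a) / 2) * (b + a) :=
      E2.trans (mul_le_mul_of_nonneg_left hab (mul_nonneg hL (by positivity)))
    have h2' : ‖F' fdag (fk1 - fk) - F' fk (fk1 - fk)‖ ≤ L * a * (b + a) :=
      h2.trans (mul_le_mul_of_nonneg_left hab (mul_nonneg hL ha0))
    nlinarith
  -- bound the linearized residual at the exact solution
  have hres : ‖F' fk (fdag - fk) + F fk - gδ‖ ≤ δ + 3 / 2 * L * a ^ 2 := by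
    have heq : F' fk (fdag - fk) + F fk - gδ =
        -(F fdag - F fk - F' fk (fdag - fk)) + (F fdag - gδ) := by abel
    rw [heq]
    refine (norm_add_le _ _).trans ?_
    rw [norm_neg]
    have : ‖F fdag - gδ‖ ≤ δ := by rwa [norm_sub_rev] at hδ
    linarith [T1]
  -- assemble
  have hsplit : F fk1 - F fdag =
      (F fk1 - F fk - F' fk (fk1 - fk)) + (F' fk (fk1 - fk) + F fk - gδ) + (gδ - F fdag) := by
    abel
  calc ‖F fk1 - F fdag‖
      ≤ ‖F fk1 - F fk - F' fk (fk1 - fk)‖ + ‖F' fk (fk1 - fk) + F fk - gδ‖ + ‖gδ - F fdag‖ := by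
        rw [hsplit]; exact (norm_add_le _ _).trans (by gcongr; exact norm_add_le _ _)
    _ ≤ L * ((b + a) / 2 + a) * (b + a) + (δ + 3 / 2 * L * a ^ 2) + δ :=
        add_le_add (add_le_add T2 (hmin.trans hres)) hδ
    _ ≤ 2 * δ + 4 * L * a ^ 2 + 3 * L / 2 * b ^ 2 := by nlinarith [sq_nonneg (a - b)]
end

section
/- Let X be a real Hilbert space and Y a real normed vector space, let F : X → Y be Fréchet differentiable on X with derivative F', let f†, f₀ ∈ X, L ≥ 0 and β ≥ 0 with βL < 1, and assume: (i) the Lipschitz condition ‖F'(x) − F'(f†)‖ ≤ L ‖x − f†‖ for all x ∈ X (operator norm); (ii) the variational source condition −⟨h, f† − f₀⟩ ≤ β ‖F'(f†) h‖ for all h ∈ X. Let δ ≥ 0, C ≥ 0 and f ∈ X satisfy ‖f − f₀‖² ≤ ‖f† − f₀‖² + Cδ. Then (1 − βL) ‖f − f†‖² ≤ Cδ + 2β ‖F(f) − F(f†)‖. -/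
open Set

/-- Quadratic Taylor remainder estimate. -/
lemma taylor_remainder_aux
    {X Y : Type*} [NormedAddCommGroup X] [NormedSpace ℝ X]
    [NormedAddCommGroup Y] [NormedSpace ℝ Y]
    (F : X → Y) (F' : X → X →L[ℝ] Y)
    (hF : ∀ x : X, HasFDerivAt F (F' x) x)
    (a b : X) (L : ℝ)
    (hLip : ∀ x : X, ‖F' x - F' a‖ ≤ L * ‖x - a‖) :
    ‖F b - F a - F' a (b - a)‖ ≤ L / 2 * ‖b - a‖ ^ 2 := by
  set v := b - a with hv
  set g : ℝ → Y := fun t => F (a + t • v) - F a - t • (F' a v) with hg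
  have hgd : ∀ t : ℝ, HasDerivAt g ((F' (a + t • v) - F' a) v) t := by
    intro t
    have h1 : HasDerivAt (fun t : ℝ => a + t • v) v t := by
      simpa using ((hasDerivAt_id t).smul_const v).const_add a
    have h2 : HasDerivAt (fun t : ℝ => F (a + t • v)) (F' (a + t • v) v) t :=
      (hF (a + t • v)).comp_hasDerivAt t h1
    have h3 : HasDerivAt (fun t : ℝ => t • (F' a v)) (F' a v) t := by
      simpa using (hasDerivAt_id t).smul_const (F' a v)
    rw [ContinuousLinearMap.sub_apply]; exact (h2.sub_const (F a)).sub h3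
  set B : ℝ → ℝ := fun t => L * ‖v‖ ^ 2 * t ^ 2 / 2 with hB
  have hBd : ∀ t : ℝ, HasDerivAt B (L * ‖v‖ ^ 2 * t) t := by
    intro t
    have : HasDerivAt (fun t : ℝ => t ^ 2) (2 * t) t := by
      simpa using hasDerivAt_pow 2 t
    have := (this.const_mul (L * ‖v‖ ^ 2)).div_const 2
    rw [show L * ‖v‖ ^ 2 * t = L * ‖v‖ ^ 2 * (2 * t) / 2 by ring]
    exact this
  have key := image_norm_le_of_norm_deriv_right_le_deriv_boundary
    (f := g) (a := 0) (b := 1) (f' := fun t => (F' (a + t • v) - F' a) v)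
    (fun t _ => (hgd t).continuousAt.continuousWithinAt)
    (fun t ht => (hgd t).hasDerivWithinAt)
    (B := B) (B' := fun t => L * ‖v‖ ^ 2 * t)
    (by simp [hg, hB]) hBd
    (by
      intro t ht
      calc ‖(F' (a + t • v) - F' a) v‖ ≤ ‖F' (a + t • v) - F' a‖ * ‖v‖ :=
            (F' (a + t • v) - F' a).le_opNorm v
        _ ≤ (L * ‖a + t • v - a‖) * ‖v‖ := by
            gcongr; exact hLip _
        _ = L * ‖v‖ ^ 2 * t := by
            have : a + t • v - a = t • v := by abel
            rw [this, norm_smul, Real.norm_eq_abs, abs_of_nonneg ht.1]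
            ring)
  have h1 := key (x := 1) (by norm_num)
  have : g 1 = F b - F a - F' a v := by simp [hg, hv]
  rw [this] at h1
  calc ‖F b - F a - F' a (b - a)‖ = ‖F b - F a - F' a v‖ := by rw [hv]
    _ ≤ B 1 := h1
    _ = L / 2 * ‖b - a‖ ^ 2 := by simp [hB, hv]; ring

/-- Error estimate under a variational source condition: if `‖f - f₀‖² ≤ ‖f† - f₀‖² + Cδ`,
a Lipschitz condition on `F'` at `f†` and the variational source condition hold, then
`(1 - βL)‖f - f†‖² ≤ Cδ + 2β‖F(f) - F(f†)‖`. -/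
theorem variational_source_condition_error_estimate
    {X Y : Type*} [NormedAddCommGroup X] [InnerProductSpace ℝ X] [CompleteSpace X]
    [NormedAddCommGroup Y] [NormedSpace ℝ Y]
    (F : X → Y) (F' : X → X →L[ℝ] Y)
    (hF : ∀ x : X, HasFDerivAt F (F' x) x)
    (fdag f₀ : X) (L β : ℝ) (hL : 0 ≤ L) (hβ : 0 ≤ β) (hβL : β * L < 1)
    (hLip : ∀ x : X, ‖F' x - F' fdag‖ ≤ L * ‖x - fdag‖)
    (hvsc : ∀ h : X, -(inner ℝ h (fdag - f₀) : ℝ) ≤ β * ‖F' fdag h‖)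
    (δ C : ℝ) (hδ : 0 ≤ δ) (hC : 0 ≤ C) (f : X)
    (hf : ‖f - f₀‖ ^ 2 ≤ ‖fdag - f₀‖ ^ 2 + C * δ) :
    (1 - β * L) * ‖f - fdag‖ ^ 2 ≤ C * δ + 2 * β * ‖F f - F fdag‖ := by
  set h := f - fdag with hh
  -- expansion: ‖f - f₀‖² = ‖h‖² + 2⟨h, fdag - f₀⟩ + ‖fdag - f₀‖²
  have hexp : ‖f - f₀‖ ^ 2 = ‖h‖ ^ 2 + 2 * (inner ℝ h (fdag - f₀) : ℝ) + ‖fdag - f₀‖ ^ 2 := by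
    have : f - f₀ = h + (fdag - f₀) := by rw [hh]; abel
    rw [this, ← real_inner_self_eq_norm_sq, ← real_inner_self_eq_norm_sq,
      ← real_inner_self_eq_norm_sq, inner_add_add_self, real_inner_comm (fdag - f₀) h]
    ring
  have h1 : ‖h‖ ^ 2 ≤ C * δ + 2 * (-(inner ℝ h (fdag - f₀) : ℝ)) := by nlinarith [hf, hexp]
  have h2 : ‖h‖ ^ 2 ≤ C * δ + 2 * (β * ‖F' fdag h‖) := by
    have := hvsc h; nlinarith
  -- Taylor: ‖F f - F fdag - F' fdag h‖ ≤ L/2 ‖h‖²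
  have htay := taylor_remainder_aux F F' hF fdag f L hLip
  have h3 : ‖F' fdag h‖ ≤ ‖F f - F fdag‖ + L / 2 * ‖h‖ ^ 2 := by
    have := norm_sub_le (F f - F fdag) (F f - F fdag - F' fdag h)
    have heq : F f - F fdag - (F f - F fdag - F' fdag h) = F' fdag h := by abel
    rw [heq] at this
    rw [← hh] at htay
    linarith
  nlinarith [h2, h3, norm_nonneg (F f - F fdag)]
end
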